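/- Let (M, μ) be a measure space with 0 < μ(M) < ∞, let ξ : M → ℝ be integrable, and let F : ℝ → ℝ be strictly increasing such that F∘ξ and ξ·(F∘ξ) are integrable. If (∫_M ξ dμ)·(∫_M F(ξ) dμ) = μ(M)·∫_M ξ·F(ξ) dμ, then ξ is constant μ-almost everywhere. -/

import Mathlib

open MeasureTheory

/-- Equality case of the generalized Hölder (Chebyshev) integral inequality:
if F is strictly increasing and equality holds, then ξ is a.e. constant. -/
theorem chebyshev_integral_equality_case
    {M : Type*} [MeasurableSpace M] (μ : Measure M) [IsFiniteMeasure μ]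
    (hpos : 0 < μ Set.univ)
    (ξ : M → ℝ) (F : ℝ → ℝ) (hF : StrictMono F)
    (hξ : Integrable ξ μ)
    (hFξ : Integrable (fun x => F (ξ x)) μ)
    (hξFξ : Integrable (fun x => ξ x * F (ξ x)) μ)
    (heq : (∫ x, ξ x ∂μ) * (∫ x, F (ξ x) ∂μ)
      = (μ Set.univ).toReal * ∫ x, ξ x * F (ξ x) ∂μ) :
    ∃ c : ℝ, ∀ᵐ x ∂μ, ξ x = c := by
  set g : M × M → ℝ := fun z => (ξ z.1 - ξ z.2) * (F (ξ z.1) - F (ξ z.2)) with hg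
  have hone : Integrable (fun _ : M => (1 : ℝ)) μ := integrable_const 1
  have hA : Integrable (fun z : M × M => ξ z.1 * F (ξ z.1)) (μ.prod μ) := by
    simpa using hξFξ.mul_prod hone
  have hB : Integrable (fun z : M × M => ξ z.1 * F (ξ z.2)) (μ.prod μ) :=
    hξ.mul_prod hFξ
  have hC : Integrable (fun z : M × M => ξ z.2 * F (ξ z.1)) (μ.prod μ) := by
    have := hFξ.mul_prod hξ
    exact this.congr (Filter.Eventually.of_forall fun z => by ring)
  have hD : Integrable (fun z : M × M => ξ z.2 * F (ξ z.2)) (μ.prod μ) := by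
    simpa using hone.mul_prod hξFξ
  have hgint : Integrable g (μ.prod μ) := by
    have : Integrable (fun z : M × M =>
        ξ z.1 * F (ξ z.1) - ξ z.1 * F (ξ z.2) - ξ z.2 * F (ξ z.1)
          + ξ z.2 * F (ξ z.2)) (μ.prod μ) := ((hA.sub hB).sub hC).add hD
    exact this.congr (Filter.Eventually.of_forall fun z => by simp [hg]; ring)
  have h1 : ∫ z, ξ z.1 * F (ξ z.1) ∂(μ.prod μ)
      = (∫ x, ξ x * F (ξ x) ∂μ) * (μ Set.univ).toReal := by
    have := integral_prod_mul (μ := μ) (ν := μ) (fun x => ξ x * F (ξ x))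
      (fun _ => (1 : ℝ))
    simpa [Measure.real] using this
  have h2 : ∫ z, ξ z.1 * F (ξ z.2) ∂(μ.prod μ)
      = (∫ x, ξ x ∂μ) * (∫ x, F (ξ x) ∂μ) :=
    integral_prod_mul (μ := μ) (ν := μ) ξ (fun x => F (ξ x))
  have h3 : ∫ z, ξ z.2 * F (ξ z.1) ∂(μ.prod μ)
      = (∫ x, F (ξ x) ∂μ) * (∫ x, ξ x ∂μ) := by
    have := integral_prod_mul (μ := μ) (ν := μ) (fun x => F (ξ x)) ξ
    rw [← this]
    exact integral_congr_ae (Filter.Eventually.of_forall fun z => by ring)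
  have h4 : ∫ z, ξ z.2 * F (ξ z.2) ∂(μ.prod μ)
      = (μ Set.univ).toReal * (∫ x, ξ x * F (ξ x) ∂μ) := by
    have := integral_prod_mul (μ := μ) (ν := μ) (fun _ => (1 : ℝ))
      (fun x => ξ x * F (ξ x))
    simpa [Measure.real] using this
  have hgzero : ∫ z, g z ∂(μ.prod μ) = 0 := by
    have e1 : ∫ z, g z ∂(μ.prod μ)
        = ∫ z, (ξ z.1 * F (ξ z.1) - ξ z.1 * F (ξ z.2) - ξ z.2 * F (ξ z.1)
            + ξ z.2 * F (ξ z.2)) ∂(μ.prod μ) :=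
      integral_congr_ae (Filter.Eventually.of_forall fun z => by
        simp only [hg]; ring)
    have e2 := integral_add
      (f := fun z : M × M => ξ z.1 * F (ξ z.1) - ξ z.1 * F (ξ z.2)
        - ξ z.2 * F (ξ z.1))
      (g := fun z : M × M => ξ z.2 * F (ξ z.2)) ((hA.sub hB).sub hC) hD
    have e3 := integral_sub
      (f := fun z : M × M => ξ z.1 * F (ξ z.1) - ξ z.1 * F (ξ z.2))
      (g := fun z : M × M => ξ z.2 * F (ξ z.1)) (hA.sub hB) hC
    have e4 := integral_sub
      (f := fun z : M × M => ξ z.1 * F (ξ z.1))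
      (g := fun z : M × M => ξ z.1 * F (ξ z.2)) hA hB
    have hc1 : (∫ x, F (ξ x) ∂μ) * (∫ x, ξ x ∂μ)
        = (μ Set.univ).toReal * ∫ x, ξ x * F (ξ x) ∂μ := by
      rw [mul_comm]; exact heq
    rw [e1, e2, e3, e4, h1, h2, h3, h4, heq, hc1]
    ring
  have hgnonneg : 0 ≤ᵐ[μ.prod μ] g := Filter.Eventually.of_forall fun z => by
    rcases lt_trichotomy (ξ z.1) (ξ z.2) with h | h | h
    · exact le_of_lt (mul_pos_of_neg_of_neg (by linarith) (by linarith [hF h]))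
    · simp [hg, h]
    · exact le_of_lt (mul_pos (by linarith) (by linarith [hF h]))
  have hgae : g =ᵐ[μ.prod μ] 0 :=
    (integral_eq_zero_iff_of_nonneg_ae hgnonneg hgint).mp hgzero
  have hxy : ∀ᵐ z ∂(μ.prod μ), ξ z.1 = ξ z.2 := by
    filter_upwards [hgae] with z hz
    by_contra hne
    rcases lt_or_gt_of_ne hne with h | h
    · have := mul_pos_of_neg_of_neg (a := ξ z.1 - ξ z.2)
        (b := F (ξ z.1) - F (ξ z.2)) (by linarith) (by linarith [hF h])
      simp only [hg, Pi.zero_apply] at hz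
      linarith
    · have := mul_pos (a := ξ z.1 - ξ z.2)
        (b := F (ξ z.1) - F (ξ z.2)) (by linarith) (by linarith [hF h])
      simp only [hg, Pi.zero_apply] at hz
      linarith
  have hxy' : ∀ᵐ x ∂μ, ∀ᵐ y ∂μ, ξ x = ξ y :=
    Measure.ae_ae_of_ae_prod hxy
  have hne : μ ≠ 0 := by
    intro h
    simp [h] at hpos
  have : (ae μ).NeBot := ae_neBot.mpr hne
  obtain ⟨x₀, hx₀⟩ := hxy'.exists
  exact ⟨ξ x₀, hx₀.mono fun y hy => hy.symm⟩
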